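/- arXiv:2506.02768 — 2 statements merged into one kernel-verified Lean document; each statement's English description precedes it below -/
import Mathlib

section
/- For any 3×3 real rotation matrix R ∈ SO(3) and any symmetric positive-definite 3×3 matrix K, the quantity (1/2)·tr(K(I − R)) is nonnegative, and it equals zero if and only if R = I. -/
open Matrix

lemma trace_tmul_nonneg (A : Matrix (Fin 3) (Fin 3) ℝ) :
    0 ≤ (Aᵀ * A).trace := by
  rw [Matrix.trace]
  refine Finset.sum_nonneg fun i _ => ?_
  rw [Matrix.diag_apply, Matrix.mul_apply]
  exact Finset.sum_nonneg fun j _ => by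
    simpa [Matrix.transpose_apply] using mul_self_nonneg (A j i)

lemma trace_tmul_eq_zero (A : Matrix (Fin 3) (Fin 3) ℝ)
    (h : (Aᵀ * A).trace = 0) : A = 0 := by
  have h' : ∀ i ∈ Finset.univ, ((Aᵀ * A).diag i) = 0 := by
    rw [Matrix.trace] at h
    refine (Finset.sum_eq_zero_iff_of_nonneg fun i _ => ?_).1 h
    rw [Matrix.diag_apply, Matrix.mul_apply]
    exact Finset.sum_nonneg fun j _ => by
      simpa [Matrix.transpose_apply] using mul_self_nonneg (A j i)
  ext j i
  have := h' i (Finset.mem_univ i)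
  rw [Matrix.diag_apply, Matrix.mul_apply] at this
  have h2 := (Finset.sum_eq_zero_iff_of_nonneg fun k _ => by
    simpa [Matrix.transpose_apply] using mul_self_nonneg (A k i)).1 this j
    (Finset.mem_univ j)
  rw [Matrix.transpose_apply] at h2
  simpa using mul_self_eq_zero.mp h2

/-- For a rotation matrix `R ∈ SO(3)` and a symmetric positive-definite matrix `K`,
the quantity `(1/2) · tr (K (I − R))` is nonnegative, and vanishes iff `R = I`. -/
theorem half_trace_K_one_sub_R_nonneg (R K : Matrix (Fin 3) (Fin 3) ℝ)
    (hRorth : Rᵀ * R = 1) (hRdet : R.det = 1) (hK : K.PosDef) :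
    0 ≤ (1 / 2 : ℝ) * (K * (1 - R)).trace ∧
      ((1 / 2 : ℝ) * (K * (1 - R)).trace = 0 ↔ R = 1) := by
  classical
  set A : Matrix (Fin 3) (Fin 3) ℝ := 1 - R with hA
  set B : Matrix (Fin 3) (Fin 3) ℝ := (open scoped MatrixOrder in CFC.sqrt K) with hB
  have hBB : B * B = K := open scoped MatrixOrder in CFC.sqrt_mul_sqrt_self K hK.posSemidef.nonneg
  have hBt : Bᵀ = B := by
    have := (open scoped MatrixOrder in Matrix.nonneg_iff_posSemidef.mp (CFC.sqrt_nonneg K)).isHermitian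
    rwa [Matrix.IsHermitian, Matrix.conjTranspose_eq_transpose_of_trivial] at this
  have hKt : Kᵀ = K := by
    have := hK.isHermitian
    rwa [Matrix.IsHermitian, Matrix.conjTranspose_eq_transpose_of_trivial] at this
  -- key trace identity
  have htA : (Aᵀ * A) = (2 : ℝ) • (1 : Matrix (Fin 3) (Fin 3) ℝ) - R - Rᵀ := by
    rw [hA]
    simp only [Matrix.transpose_sub, Matrix.transpose_one, Matrix.sub_mul, Matrix.mul_sub,
      Matrix.one_mul, Matrix.mul_one, hRorth]
    module
  have hTrKRt : (K * Rᵀ).trace = (K * R).trace := by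
    rw [← Matrix.trace_transpose (K * Rᵀ), Matrix.transpose_mul, Matrix.transpose_transpose,
      hKt, Matrix.trace_mul_comm]
  have hkey : (K * (Aᵀ * A)).trace = 2 * (K * A).trace := by
    rw [htA, hA]
    simp only [Matrix.mul_sub, Matrix.mul_smul, Matrix.mul_one, Matrix.trace_sub,
      Matrix.trace_smul, hTrKRt, smul_eq_mul]
    ring
  -- rewrite as trace of (A*B)ᵀ * (A*B)
  have hconj : ((A * B)ᵀ * (A * B)).trace = (K * (Aᵀ * A)).trace := by
    rw [Matrix.transpose_mul, hBt]
    calc (B * Aᵀ * (A * B)).trace = (B * (Aᵀ * (A * B))).trace := by rw [Matrix.mul_assoc]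
      _ = ((Aᵀ * (A * B)) * B).trace := by rw [Matrix.trace_mul_comm]
      _ = ((Aᵀ * A) * K).trace := by
          rw [Matrix.mul_assoc, Matrix.mul_assoc, hBB, ← Matrix.mul_assoc]
      _ = (K * (Aᵀ * A)).trace := Matrix.trace_mul_comm _ _
  have hnn : 0 ≤ (K * A).trace := by
    have := trace_tmul_nonneg (A * B)
    rw [hconj, hkey] at this
    linarith
  refine ⟨by linarith, ?_, ?_⟩
  · intro h
    have h0 : (K * A).trace = 0 := by linarith
    have h1 : ((A * B)ᵀ * (A * B)).trace = 0 := by rw [hconj, hkey, h0]; ring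
    have hAB : A * B = 0 := trace_tmul_eq_zero _ h1
    have hAK : A * K = 0 := by
      rw [← hBB, ← Matrix.mul_assoc, hAB, Matrix.zero_mul]
    have hKu : IsUnit K := hK.isUnit
    have : A = 0 := by
      have := congrArg (fun M => M * K⁻¹) hAK
      simpa [Matrix.mul_assoc, Matrix.mul_nonsing_inv K
        ((Matrix.isUnit_iff_isUnit_det K).mp hKu)] using this
    have : (1 : Matrix (Fin 3) (Fin 3) ℝ) - R = 0 := this
    linear_combination (norm := (ext i j; simp)) -this
  · intro h
    rw [hA] at *
    rw [h]
    simp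
end

section
/- Let ω ∈ ℝ³ with ‖ω‖ = 1 and let ω̂ be its skew-symmetric hat matrix. Then for all q ∈ ℝ, the matrix exponential satisfies exp(ω̂ q) = I + ω̂ sin(q) + ω̂² (1 − cos(q)) (Rodrigues' formula). -/
open Matrix

open scoped Nat

/-- The hat (cross-product) matrix of a vector `ω ∈ ℝ³`. -/
def hatMatrix (ω : Fin 3 → ℝ) : Matrix (Fin 3) (Fin 3) ℝ :=
  !![0, -ω 2, ω 1; ω 2, 0, -ω 0; -ω 1, ω 0, 0]

lemma hat_cube (ω : Fin 3 → ℝ) (hω : ω 0 ^ 2 + ω 1 ^ 2 + ω 2 ^ 2 = 1) :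
    hatMatrix ω ^ 3 = -hatMatrix ω := by
  ext i j
  fin_cases i <;> fin_cases j <;>
    simp [hatMatrix, pow_succ, Matrix.mul_apply, Fin.sum_univ_three] <;>
    first
      | linear_combination ω 0 * hω
      | linear_combination (-ω 0) * hω
      | linear_combination ω 1 * hω
      | linear_combination (-ω 1) * hω
      | linear_combination ω 2 * hω
      | linear_combination (-ω 2) * hω
      | linear_combination hω
      | linear_combination -hω
      | ring

lemma hat_pow_odd (A : Matrix (Fin 3) (Fin 3) ℝ) (h3 : A ^ 3 = -A) (k : ℕ) :
    A ^ (2 * k + 1) = ((-1 : ℝ) ^ k) • A := by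
  induction k with
  | zero => simp
  | succ k ih =>
    have e : 2 * (k + 1) + 1 = (2 * k + 1) + 2 := by ring
    calc A ^ (2 * (k + 1) + 1) = A ^ (2 * k + 1) * A ^ 2 := by rw [e, pow_add]
      _ = (-1 : ℝ) ^ k • (A ^ 1 * A ^ 2) := by rw [ih]; simp [smul_mul_assoc]
      _ = (-1 : ℝ) ^ k • A ^ 3 := by rw [← pow_add]
      _ = (-1 : ℝ) ^ (k + 1) • A := by
          rw [h3, pow_succ, smul_neg]
          rw [mul_comm, ← smul_smul]
          simp

lemma hat_pow_even (A : Matrix (Fin 3) (Fin 3) ℝ) (h3 : A ^ 3 = -A) (k : ℕ) :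
    A ^ (2 * k + 2) = ((-1 : ℝ) ^ k) • (A * A) := by
  have e : 2 * k + 2 = (2 * k + 1) + 1 := by ring
  rw [e, pow_succ, hat_pow_odd A h3 k, smul_mul_assoc]

/-- Rodrigues' formula: for a unit vector `ω ∈ ℝ³` and any `q ∈ ℝ`,
`exp(ω̂ q) = I + ω̂ sin q + ω̂² (1 − cos q)`. -/
theorem rodrigues_formula (ω : Fin 3 → ℝ)
    (hω : ω 0 ^ 2 + ω 1 ^ 2 + ω 2 ^ 2 = 1) (q : ℝ) :
    NormedSpace.exp (q • hatMatrix ω) =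
      1 + Real.sin q • hatMatrix ω + (1 - Real.cos q) • (hatMatrix ω * hatMatrix ω) := by
  set A := hatMatrix ω with hA
  have h3 : A ^ 3 = -A := hat_cube ω hω
  rw [NormedSpace.exp_eq_tsum (𝕂 := ℝ)]
  have key : HasSum (fun n : ℕ => ((n ! : ℝ)⁻¹) • (q • A) ^ n)
      ((1 + (1 - Real.cos q) • (A * A)) + Real.sin q • A) := by
    refine HasSum.even_add_odd ?_ ?_
    · -- even part
      rw [← hasSum_nat_add_iff' 1]
      have hc : HasSum (fun n : ℕ => ((-1 : ℝ) ^ n * q ^ (2 * n + 2) / (2 * n + 2)!))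
          (1 - Real.cos q) := by
        have h := (hasSum_nat_add_iff' (f := fun n : ℕ =>
            (-1 : ℝ) ^ n * q ^ (2 * n) / (2 * n)!) 1).mpr (Real.hasSum_cos q)
        have h' := h.neg
        simp only [Finset.range_one, Finset.sum_singleton] at h'
        convert h' using 1
        · rfl
        · funext n
          have e : 2 * (n + 1) = 2 * n + 2 := by ring
          simp only [e, pow_succ]
          ring
        · norm_num
      have hc2 := hc.smul_const (A * A)
      convert hc2 using 1
      · rfl
      · funext n
        have e : 2 * (n + 1) = 2 * n + 2 := by omega
        simp only [e, smul_pow, hat_pow_even A h3 n, smul_smul]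
        congr 1
        rw [div_eq_mul_inv]
        ring
      · simp only [Finset.range_one, Finset.sum_singleton]
        simp
    · -- odd part
      have hs := (Real.hasSum_sin q).smul_const A
      convert hs using 1
      funext n
      simp only [smul_pow, hat_pow_odd A h3 n, smul_smul]
      congr 1
      rw [div_eq_mul_inv]
      ring
  refine key.tsum_eq.trans ?_
  abel
end
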